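/- For every nonnegative integer r and every partition λ with n = |λ|: as an identity of polynomials in z, D^{r+1}( φ_λ(z)/H_λ ) = z(z+1)⋯(z+r) · φ_λ(z+r+1)/H_λ, where φ_λ(z) := ∏_{i=1}^{n} (z + n + λ_i − i). In particular, D^{r+1}( φ_λ(−r)/H_λ ) = 0 for every partition λ, i.e. λ ↦ φ_λ(−r) is a D-polynomial of degree at most r. -/

import Mathlib

open scoped Classical

namespace HookDiff

/-- The hook length of the box `c` in the Young diagram `μ`: the number of boxes
directly to its right, directly below/above it in its column, plus the box itself. -/
def hook (μ : YoungDiagram) (c : ℕ × ℕ) : ℕ :=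
  (μ.cells.filter (fun d => (d.1 = c.1 ∧ c.2 ≤ d.2) ∨ (d.2 = c.2 ∧ c.1 ≤ d.1))).card

/-- `H μ` is the product of all hook lengths of `μ`. -/
def H (μ : YoungDiagram) : ℚ := ∏ c ∈ μ.cells, (hook μ c : ℚ)

/-- The cells that can be added to `μ` to produce a Young diagram (inner corners). -/
noncomputable def addables (μ : YoungDiagram) : Finset (ℕ × ℕ) :=
  (Finset.range (μ.card + 1) ×ˢ Finset.range (μ.card + 1)).filter
    (fun c => c ∉ μ ∧ IsLowerSet (↑(insert c μ.cells) : Set (ℕ × ℕ)))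

/-- Add a box at cell `c` to `μ` (junk value `μ` if the result is not a diagram). -/
noncomputable def addBox (μ : YoungDiagram) (c : ℕ × ℕ) : YoungDiagram :=
  if h : IsLowerSet (↑(insert c μ.cells) : Set (ℕ × ℕ)) then ⟨insert c μ.cells, h⟩ else μ

/-- The cells that can be removed from `μ` leaving a Young diagram (outer corners). -/
noncomputable def removables (μ : YoungDiagram) : Finset (ℕ × ℕ) :=
  μ.cells.filter (fun c => IsLowerSet (↑(μ.cells.erase c) : Set (ℕ × ℕ)))

/-- Remove the box at cell `c` from `μ` (junk value `μ` if the result is not a diagram). -/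
noncomputable def removeBox (μ : YoungDiagram) (c : ℕ × ℕ) : YoungDiagram :=
  if h : IsLowerSet (↑(μ.cells.erase c) : Set (ℕ × ℕ)) then ⟨μ.cells.erase c, h⟩ else μ

/-- The difference operator `D`: `Dg(λ) = Σ_{λ⁺} g(λ⁺) − g(λ)`, where `λ⁺` runs over
all partitions obtained from `λ` by adding one box. -/
noncomputable def D (g : YoungDiagram → ℚ) : YoungDiagram → ℚ :=
  fun μ => (∑ c ∈ addables μ, g (addBox μ c)) - g μ

/-- The difference operator `D⁻`: `D⁻g(λ) = |λ|·g(λ) − Σ_{λ⁻} g(λ⁻)`, where `λ⁻` runs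
over all partitions obtained from `λ` by removing one box. -/
noncomputable def Dminus (g : YoungDiagram → ℚ) : YoungDiagram → ℚ :=
  fun μ => (μ.card : ℚ) * g μ - ∑ c ∈ removables μ, g (removeBox μ c)

/-- `fskew n μ λ` is the number of standard Young tableaux of skew shape `λ/μ`
(with `n = |λ| - |μ|`), i.e. the number of chains `μ = ν₀ ⊂ ν₁ ⊂ ⋯ ⊂ ν_n = λ`
in which each diagram is obtained from the previous one by adding a single box. -/
noncomputable def fskew : ℕ → YoungDiagram → YoungDiagram → ℕ
  | 0, μ, l => if μ = l then 1 else 0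
  | n + 1, μ, l => ∑ c ∈ addables μ, fskew n (addBox μ c) l

/-- `f_λ`, the number of standard Young tableaux of shape `λ`. -/
noncomputable def f (l : YoungDiagram) : ℕ := fskew l.card ⊥ l

/-- `S(λ, r) = Σ_{□∈λ} ∏_{j=1}^{r} (h_□² − j²)`. -/
def S (l : YoungDiagram) (r : ℕ) : ℚ :=
  ∑ c ∈ l.cells, ∏ j ∈ Finset.Icc 1 r, ((hook l c : ℚ) ^ 2 - (j : ℚ) ^ 2)

/-- `K_r = (2r)!·(2r+1)! / (r!·(r+1)!²)`. -/
def K (r : ℕ) : ℚ :=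
  ((2 * r).factorial : ℚ) * ((2 * r + 1).factorial : ℚ) /
    ((r.factorial : ℚ) * ((r + 1).factorial : ℚ) ^ 2)

/-- The content of the box `c = (i, j)` is `j - i`. -/
def content (c : ℕ × ℕ) : ℚ := (c.2 : ℚ) - (c.1 : ℚ)

/-- `C(λ, r) = Σ_{□∈λ} ∏_{j=0}^{r-1} (c_□² − j²)`. -/
def Ccont (l : YoungDiagram) (r : ℕ) : ℚ :=
  ∑ c ∈ l.cells, ∏ j ∈ Finset.range r, (content c ^ 2 - (j : ℚ) ^ 2)


/-- `φ_λ(z) = ∏_{i=1}^{n} (z + n + λ_i − i)` with `n = |λ|`, evaluated at `z : ℚ`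
(here `λ_i = rowLen (i-1)`, and `λ_i = 0` beyond the last part). -/
def phiEval (μ : YoungDiagram) (z : ℚ) : ℚ :=
  ∏ i ∈ Finset.range μ.card, (z + (μ.card : ℚ) + (μ.rowLen i : ℚ) - (i : ℚ) - 1)

open Finset Polynomial


lemma basis_coeff_top (s : Finset ℚ) (q : ℚ) (hq : q ∈ s) :
    (Lagrange.basis s id q).coeff (s.card - 1)
      = (∏ j ∈ s.erase q, (q - j))⁻¹ := by
  have hb : Lagrange.basis s id q
      = C (∏ j ∈ s.erase q, (q - j)⁻¹) * ∏ j ∈ s.erase q, (X - C j) := by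
    rw [Lagrange.basis, map_prod, ← prod_mul_distrib]
    exact prod_congr rfl (fun j _ => rfl)
  rw [hb]
  have hmonic : (∏ j ∈ s.erase q, (X - C (j:ℚ))).Monic :=
    monic_prod_of_monic _ _ (fun j _ => monic_X_sub_C j)
  have hdeg : (∏ j ∈ s.erase q, (X - C (j:ℚ))).natDegree = s.card - 1 := by
    rw [natDegree_prod _ _ (fun j _ => X_sub_C_ne_zero j)]
    simp [card_erase_of_mem hq]
  rw [coeff_C_mul, ← hdeg, hmonic.coeff_natDegree, mul_one, ← prod_inv_distrib]

lemma lagrange_residue_sum (s : Finset ℚ) (P : Polynomial ℚ)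
    (h : P.degree < s.card) :
    ∑ q ∈ s, P.eval q * (∏ j ∈ s.erase q, (q - j))⁻¹ = P.coeff (s.card - 1) := by
  have hinj : Set.InjOn id (s : Set ℚ) := Function.injective_id.injOn
  have hP := Lagrange.eq_interpolate hinj h
  conv_rhs => rw [hP]
  rw [Lagrange.interpolate_apply, finset_sum_coeff]
  refine Finset.sum_congr rfl (fun q hq => ?_)
  rw [coeff_C_mul, basis_coeff_top s q hq]
  rfl

lemma hook_eq (μ : YoungDiagram) (i j : ℕ) (hc : (i, j) ∈ μ) :
    hook μ (i, j) + i + j + 1 = μ.rowLen i + μ.colLen j := by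
  have hfilter : μ.cells.filter (fun d => (d.1 = i ∧ j ≤ d.2) ∨ (d.2 = j ∧ i ≤ d.1))
      = ({i} ×ˢ Finset.Ico j (μ.rowLen i)) ∪ (Finset.Ico i (μ.colLen j) ×ˢ {j}) := by
    ext ⟨a, b⟩
    simp only [mem_filter, mem_union, mem_product, mem_singleton, mem_Ico,
      YoungDiagram.mem_cells]
    constructor
    · rintro ⟨hab, (⟨rfl, hb⟩ | ⟨rfl, ha⟩)⟩
      · exact Or.inl ⟨rfl, hb, YoungDiagram.mem_iff_lt_rowLen.mp hab⟩
      · exact Or.inr ⟨⟨ha, YoungDiagram.mem_iff_lt_colLen.mp hab⟩, rfl⟩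
    · rintro (⟨rfl, hb, hb'⟩ | ⟨⟨ha, ha'⟩, rfl⟩)
      · exact ⟨YoungDiagram.mem_iff_lt_rowLen.mpr hb', Or.inl ⟨rfl, hb⟩⟩
      · exact ⟨YoungDiagram.mem_iff_lt_colLen.mpr ha', Or.inr ⟨rfl, ha⟩⟩
  have hinter : (({i} ×ˢ Finset.Ico j (μ.rowLen i)) ∩ (Finset.Ico i (μ.colLen j) ×ˢ {j}))
      = {(i, j)} := by
    ext ⟨a, b⟩
    simp only [mem_inter, mem_product, mem_singleton, mem_Ico, Prod.mk.injEq]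
    constructor
    · rintro ⟨⟨rfl, hb, _⟩, _, rfl⟩; exact ⟨rfl, rfl⟩
    · rintro ⟨rfl, rfl⟩
      exact ⟨⟨rfl, le_refl _, YoungDiagram.mem_iff_lt_rowLen.mp hc⟩,
        ⟨le_refl _, YoungDiagram.mem_iff_lt_colLen.mp hc⟩, rfl⟩
  have hrow : j < μ.rowLen i := YoungDiagram.mem_iff_lt_rowLen.mp hc
  have hcol : i < μ.colLen j := YoungDiagram.mem_iff_lt_colLen.mp hc
  have := Finset.card_union_add_card_inter
    ({i} ×ˢ Finset.Ico j (μ.rowLen i)) (Finset.Ico i (μ.colLen j) ×ˢ {j})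
  rw [hinter] at this
  simp only [Finset.card_singleton, Finset.card_product, Nat.card_Ico,
    mul_one, one_mul] at this
  unfold hook
  rw [hfilter]
  omega

lemma hook_pos (μ : YoungDiagram) (c : ℕ × ℕ) (hc : c ∈ μ) : 0 < hook μ c := by
  rw [hook, Finset.card_pos]
  exact ⟨c, Finset.mem_filter.mpr ⟨(YoungDiagram.mem_cells c).mpr hc, Or.inl ⟨rfl, le_refl _⟩⟩⟩

lemma rowLen_zero_of_rows_le (μ : YoungDiagram) (i : ℕ) (h : μ.colLen 0 ≤ i) :
    μ.rowLen i = 0 := by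
  by_contra hne
  have : (i, 0) ∈ μ := YoungDiagram.mem_iff_lt_rowLen.mpr (Nat.pos_of_ne_zero hne)
  have := YoungDiagram.mem_iff_lt_colLen.mp this
  omega

lemma rows_le_card (μ : YoungDiagram) : μ.colLen 0 ≤ μ.card := by
  rw [YoungDiagram.colLen_eq_card]
  exact Finset.card_le_card (fun c hc => (Finset.mem_filter.mp hc).1)

lemma rowLen_le_card (μ : YoungDiagram) (i : ℕ) : μ.rowLen i ≤ μ.card := by
  calc μ.rowLen i ≤ μ.rowLen 0 := μ.rowLen_anti 0 i (Nat.zero_le i)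
    _ ≤ μ.card := by
      rw [YoungDiagram.rowLen_eq_card]
      exact Finset.card_le_card (fun c hc => (Finset.mem_filter.mp hc).1)

lemma cells_eq_biUnion (μ : YoungDiagram) (m : ℕ) (hm : μ.colLen 0 ≤ m) :
    μ.cells = (Finset.range m).biUnion (fun i => {i} ×ˢ Finset.range (μ.rowLen i)) := by
  ext ⟨a, b⟩
  simp only [Finset.mem_biUnion, Finset.mem_range, mem_product, mem_singleton,
    YoungDiagram.mem_cells]
  constructor
  · intro hab
    refine ⟨a, ?_, rfl, YoungDiagram.mem_iff_lt_rowLen.mp hab⟩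
    have := YoungDiagram.mem_iff_lt_colLen.mp (μ.up_left_mem (le_refl a) (Nat.zero_le b) hab)
    omega
  · rintro ⟨i, _, rfl, hb⟩
    exact YoungDiagram.mem_iff_lt_rowLen.mpr hb

lemma card_eq_sum_rowLens (μ : YoungDiagram) (m : ℕ) (hm : μ.colLen 0 ≤ m) :
    μ.card = ∑ i ∈ Finset.range m, μ.rowLen i := by
  change μ.cells.card = _
  rw [cells_eq_biUnion μ m hm, Finset.card_biUnion]
  · exact Finset.sum_congr rfl (fun i _ => by simp)
  · intro a _ b _ hab
    simp only [Finset.disjoint_left, mem_product, mem_singleton]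
    rintro ⟨x, y⟩ ⟨h1, _⟩ ⟨h2, _⟩
    exact hab (h1.symm.trans h2)

lemma prod_cells_eq (μ : YoungDiagram) (m : ℕ) (hm : μ.colLen 0 ≤ m) (g : ℕ × ℕ → ℚ) :
    ∏ c ∈ μ.cells, g c = ∏ i ∈ Finset.range m, ∏ j ∈ Finset.range (μ.rowLen i), g (i, j) := by
  rw [cells_eq_biUnion μ m hm, Finset.prod_biUnion]
  · refine Finset.prod_congr rfl (fun i _ => ?_)
    rw [Finset.prod_product]
    simp
  · intro a _ b _ hab
    simp only [Finset.disjoint_left, mem_product, mem_singleton]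
    rintro ⟨x, y⟩ ⟨h1, _⟩ ⟨h2, _⟩
    exact hab (h1.symm.trans h2)

/-- `L μ m i = μ.rowLen i + (m - 1 - i)`, the shifted first-column coordinates. -/
def L (μ : YoungDiagram) (m i : ℕ) : ℕ := μ.rowLen i + (m - 1 - i)

lemma L_strictAnti (μ : YoungDiagram) (m : ℕ) {a b : ℕ} (hab : a < b) (hb : b < m) :
    L μ m b < L μ m a := by
  have := μ.rowLen_anti a b (le_of_lt hab)
  unfold L; omega

lemma hook_row_eq (μ : YoungDiagram) {m i j : ℕ} (hm : μ.colLen 0 ≤ m) (hi : i < m)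
    (hj : j < μ.rowLen i) :
    hook μ (i, j) + i + j + 1 = μ.rowLen i + μ.colLen j
      ∧ i < μ.colLen j ∧ μ.colLen j ≤ m := by
  have hc : (i, j) ∈ μ := YoungDiagram.mem_iff_lt_rowLen.mpr hj
  exact ⟨hook_eq μ i j hc, YoungDiagram.mem_iff_lt_colLen.mp hc,
    le_trans (μ.colLen_anti 0 j (Nat.zero_le j)) hm⟩

/-- The multiset of hooks in row `i` together with the differences `L i - L j`
fills `[1, L i]`. -/
lemma row_hook_union (μ : YoungDiagram) (m i : ℕ) (hm : μ.colLen 0 ≤ m) (hi : i < m) :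
    ((Finset.range (μ.rowLen i)).image (fun j => hook μ (i, j))) ∪
      ((Finset.Ico (i+1) m).image (fun j => L μ m i - L μ m j))
      = Finset.Icc 1 (L μ m i) := by
  set A := (Finset.range (μ.rowLen i)).image (fun j => hook μ (i, j)) with hA
  set B := (Finset.Ico (i+1) m).image (fun j => L μ m i - L μ m j) with hB
  have hAcard : A.card = μ.rowLen i := by
    rw [hA, Finset.card_image_of_injOn, Finset.card_range]
    intro a ha b hb hab
    simp only at hab
    simp only [Finset.mem_coe, Finset.mem_range] at ha hb
    obtain ⟨e1, -, -⟩ := hook_row_eq μ hm hi ha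
    obtain ⟨e2, -, -⟩ := hook_row_eq μ hm hi hb
    rcases Nat.lt_trichotomy a b with h | h | h
    · have := μ.colLen_anti a b (le_of_lt h); omega
    · exact h
    · have := μ.colLen_anti b a (le_of_lt h); omega
  have hBcard : B.card = m - (i+1) := by
    rw [hB, Finset.card_image_of_injOn, Nat.card_Ico]
    intro a ha b hb hab
    simp only at hab
    simp only [Finset.mem_coe, Finset.mem_Ico] at ha hb
    have ha' := L_strictAnti μ m (show i < a by omega) ha.2
    have hb' := L_strictAnti μ m (show i < b by omega) hb.2
    rcases Nat.lt_trichotomy a b with h | h | h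
    · have := L_strictAnti μ m h hb.2; omega
    · exact h
    · have := L_strictAnti μ m h ha.2; omega
  have hsub : A ∪ B ⊆ Finset.Icc 1 (L μ m i) := by
    intro t ht
    rw [Finset.mem_union] at ht
    rcases ht with ht | ht
    · rw [hA, Finset.mem_image] at ht
      obtain ⟨j, hj, rfl⟩ := ht
      rw [Finset.mem_range] at hj
      obtain ⟨e1, e2, e3⟩ := hook_row_eq μ hm hi hj
      have hpos := hook_pos μ (i, j) (YoungDiagram.mem_iff_lt_rowLen.mpr hj)
      rw [Finset.mem_Icc]
      unfold L; omega
    · rw [hB, Finset.mem_image] at ht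
      obtain ⟨j, hj, rfl⟩ := ht
      rw [Finset.mem_Ico] at hj
      have := L_strictAnti μ m (show i < j by omega) hj.2
      rw [Finset.mem_Icc]; omega
  have hdisj : Disjoint A B := by
    rw [Finset.disjoint_left]
    intro t htA htB
    rw [hA, Finset.mem_image] at htA
    rw [hB, Finset.mem_image] at htB
    obtain ⟨j, hj, rfl⟩ := htA
    obtain ⟨k, hk, hkt⟩ := htB
    rw [Finset.mem_range] at hj
    rw [Finset.mem_Ico] at hk
    obtain ⟨e1, e2, e3⟩ := hook_row_eq μ hm hi hj
    have hLk := L_strictAnti μ m (show i < k by omega) hk.2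
    -- hook μ (i,j) = L i - L k leads to colLen j + rowLen k = j + k + 1, contradiction
    have hrk := μ.rowLen_anti i k (le_of_lt (show i < k by omega))
    rcases Nat.lt_or_ge j (μ.rowLen k) with h | h
    · -- (k, j) ∈ μ : k < colLen j
      have : k < μ.colLen j := YoungDiagram.mem_iff_lt_colLen.mp
        (YoungDiagram.mem_iff_lt_rowLen.mpr h)
      unfold L at hkt hLk; omega
    · -- colLen j ≤ k
      have : μ.colLen j ≤ k := by
        by_contra hcon
        have : (k, j) ∈ μ := YoungDiagram.mem_iff_lt_colLen.mpr (by omega)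
        have := YoungDiagram.mem_iff_lt_rowLen.mp this
        omega
      unfold L at hkt hLk; omega
  apply Finset.eq_of_subset_of_card_le hsub
  rw [Finset.card_union_of_disjoint hdisj, hAcard, hBcard, Nat.card_Icc]
  unfold L; omega

lemma prod_row_hooks (μ : YoungDiagram) (m i : ℕ) (hm : μ.colLen 0 ≤ m) (hi : i < m) :
    (∏ j ∈ Finset.range (μ.rowLen i), (hook μ (i, j) : ℚ)) *
      (∏ j ∈ Finset.Ico (i+1) m, ((L μ m i - L μ m j : ℕ) : ℚ))
      = ((L μ m i).factorial : ℚ) := by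
  have key := row_hook_union μ m i hm hi
  have hAinj : Set.InjOn (fun j => hook μ (i, j)) (Finset.range (μ.rowLen i)) := by
    intro a ha b hb hab
    simp only at hab
    simp only [Finset.mem_coe, Finset.mem_range] at ha hb
    obtain ⟨e1, -, -⟩ := hook_row_eq μ hm hi ha
    obtain ⟨e2, -, -⟩ := hook_row_eq μ hm hi hb
    rcases Nat.lt_trichotomy a b with h | h | h
    · have := μ.colLen_anti a b (le_of_lt h); omega
    · exact h
    · have := μ.colLen_anti b a (le_of_lt h); omega
  have hBinj : Set.InjOn (fun j => L μ m i - L μ m j) (Finset.Ico (i+1) m) := by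
    intro a ha b hb hab
    simp only at hab
    simp only [Finset.mem_coe, Finset.mem_Ico] at ha hb
    have ha' := L_strictAnti μ m (show i < a by omega) ha.2
    have hb' := L_strictAnti μ m (show i < b by omega) hb.2
    rcases Nat.lt_trichotomy a b with h | h | h
    · have := L_strictAnti μ m h hb.2; omega
    · exact h
    · have := L_strictAnti μ m h ha.2; omega
  have hdisj : Disjoint ((Finset.range (μ.rowLen i)).image (fun j => hook μ (i, j)))
      ((Finset.Ico (i+1) m).image (fun j => L μ m i - L μ m j)) := by
    have hcard := Finset.card_union_add_card_inter
      ((Finset.range (μ.rowLen i)).image (fun j => hook μ (i, j)))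
      ((Finset.Ico (i+1) m).image (fun j => L μ m i - L μ m j))
    rw [key, Nat.card_Icc] at hcard
    rw [Finset.card_image_of_injOn hAinj, Finset.card_image_of_injOn hBinj] at hcard
    rw [Finset.card_range, Nat.card_Ico] at hcard
    have : ((Finset.range (μ.rowLen i)).image (fun j => hook μ (i, j)) ∩
        (Finset.Ico (i+1) m).image (fun j => L μ m i - L μ m j)).card = 0 := by
      unfold L at hcard ⊢; omega
    rw [Finset.card_eq_zero] at this
    exact Finset.disjoint_iff_inter_eq_empty.mpr this
  have hfact : ∏ t ∈ Finset.Icc 1 (L μ m i), (t : ℚ) = ((L μ m i).factorial : ℚ) := by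
    rw [← Nat.cast_prod]
    congr 1
    rw [← Finset.Ico_add_one_right_eq_Icc]
    exact Finset.prod_Ico_id_eq_factorial (L μ m i)
  rw [← hfact, ← key, Finset.prod_union hdisj,
    Finset.prod_image hAinj, Finset.prod_image hBinj]

lemma H_ne_zero (μ : YoungDiagram) : H μ ≠ 0 := by
  rw [H]
  apply Finset.prod_ne_zero_iff.mpr
  intro c hc
  have := hook_pos μ c ((YoungDiagram.mem_cells c).mp hc)
  positivity

lemma H_formula (μ : YoungDiagram) (m : ℕ) (hm : μ.colLen 0 ≤ m) :
    H μ * ∏ i ∈ Finset.range m, ∏ j ∈ Finset.Ico (i+1) m, ((L μ m i - L μ m j : ℕ) : ℚ)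
      = ∏ i ∈ Finset.range m, ((L μ m i).factorial : ℚ) := by
  have hH : H μ = ∏ i ∈ Finset.range m, ∏ j ∈ Finset.range (μ.rowLen i), (hook μ (i, j) : ℚ) :=
    prod_cells_eq μ m hm (fun c => (hook μ c : ℚ))
  rw [hH, ← Finset.prod_mul_distrib]
  exact Finset.prod_congr rfl (fun i hi => prod_row_hooks μ m i hm (Finset.mem_range.mp hi))

def Addable (μ : YoungDiagram) (k : ℕ) : Prop := k = 0 ∨ μ.rowLen k < μ.rowLen (k - 1)

lemma addable_char (μ : YoungDiagram) (c : ℕ × ℕ) :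
    (c ∉ μ ∧ IsLowerSet (↑(insert c μ.cells) : Set (ℕ × ℕ))) ↔
      c.2 = μ.rowLen c.1 ∧ Addable μ c.1 := by
  obtain ⟨i, j⟩ := c
  simp only [Addable]
  constructor
  · rintro ⟨hne, hls⟩
    have hge : μ.rowLen i ≤ j := by
      by_contra h
      exact hne (YoungDiagram.mem_iff_lt_rowLen.mpr (by omega))
    have hle : j ≤ μ.rowLen i := by
      by_contra h
      have hmem : ((i, μ.rowLen i) : ℕ × ℕ) ∈ (↑(insert (i,j) μ.cells) : Set (ℕ × ℕ)) := by
        apply hls (a := ((i, j) : ℕ × ℕ))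
        · exact ⟨le_refl i, by omega⟩
        · simp
      simp only [Finset.coe_insert, Set.mem_insert_iff, Finset.mem_coe,
        YoungDiagram.mem_cells, Prod.mk.injEq] at hmem
      rcases hmem with ⟨-, h2⟩ | hmem
      · omega
      · exact absurd (YoungDiagram.mem_iff_lt_rowLen.mp hmem) (by omega)
    have hj : j = μ.rowLen i := le_antisymm hle hge
    refine ⟨hj, ?_⟩
    rcases Nat.eq_zero_or_pos i with h0 | hpos
    · exact Or.inl h0
    · right
      have hmem : ((i - 1, j) : ℕ × ℕ) ∈ (↑(insert (i,j) μ.cells) : Set (ℕ × ℕ)) := by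
        apply hls (a := ((i, j) : ℕ × ℕ))
        · exact ⟨by omega, le_refl j⟩
        · simp
      simp only [Finset.coe_insert, Set.mem_insert_iff, Finset.mem_coe,
        YoungDiagram.mem_cells, Prod.mk.injEq] at hmem
      rcases hmem with ⟨h1, -⟩ | hmem
      · omega
      · have := YoungDiagram.mem_iff_lt_rowLen.mp hmem
        omega
  · rintro ⟨hj, hadd⟩
    subst hj
    constructor
    · intro h
      exact absurd (YoungDiagram.mem_iff_lt_rowLen.mp h) (lt_irrefl _)
    · intro x y hyx hx
      simp only [Finset.coe_insert, Set.mem_insert_iff, Finset.mem_coe,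
        YoungDiagram.mem_cells] at hx ⊢
      rcases hx with rfl | hx
      · obtain ⟨a, b⟩ := y
        obtain ⟨h1, h2⟩ := hyx
        simp only at h1 h2
        rcases Nat.lt_or_ge b (μ.rowLen i) with hb | hb
        · right
          apply YoungDiagram.mem_iff_lt_rowLen.mpr
          calc b < μ.rowLen i := hb
            _ ≤ μ.rowLen a := μ.rowLen_anti a i h1
        · have hbe : b = μ.rowLen i := by omega
          rcases Nat.lt_or_ge a i with ha | ha
          · right
            apply YoungDiagram.mem_iff_lt_rowLen.mpr
            rcases hadd with h0 | hcorner
            · omega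
            · calc b < μ.rowLen (i - 1) := by omega
                _ ≤ μ.rowLen a := μ.rowLen_anti a (i-1) (by omega)
          · left
            have : a = i := by omega
            subst this; subst hbe; rfl
      · right
        exact μ.isLowerSet hyx hx

lemma slot_le_card (μ : YoungDiagram) (k : ℕ) (hk : Addable μ k) : k ≤ μ.card := by
  rcases hk with rfl | hk
  · exact Nat.zero_le _
  · have : (k - 1, 0) ∈ μ := YoungDiagram.mem_iff_lt_rowLen.mpr (by omega)
    have h1 := YoungDiagram.mem_iff_lt_colLen.mp this
    have h2 := rows_le_card μ
    rcases Nat.eq_zero_or_pos k with h0 | hpos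
    · omega
    · omega

noncomputable def slots (μ : YoungDiagram) : Finset ℕ :=
  (Finset.range (μ.card + 1)).filter (fun k => Addable μ k)

lemma addables_eq (μ : YoungDiagram) :
    addables μ = (slots μ).image (fun k => (k, μ.rowLen k)) := by
  ext c
  simp only [addables, slots, Finset.mem_filter, Finset.mem_image, Finset.mem_product,
    Finset.mem_range]
  constructor
  · rintro ⟨⟨h1, h2⟩, hc⟩
    obtain ⟨hj, hadd⟩ := (addable_char μ c).mp hc
    exact ⟨c.1, ⟨by omega, hadd⟩, by rw [← hj]⟩
  · rintro ⟨k, ⟨hk, hadd⟩, rfl⟩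
    refine ⟨⟨hk, ?_⟩, (addable_char μ (k, μ.rowLen k)).mpr ⟨rfl, hadd⟩⟩
    have := rowLen_le_card μ k
    omega

lemma addBox_cells (μ : YoungDiagram) (k : ℕ) (hk : Addable μ k) :
    (addBox μ (k, μ.rowLen k)).cells = insert (k, μ.rowLen k) μ.cells := by
  have hls := ((addable_char μ (k, μ.rowLen k)).mpr ⟨rfl, hk⟩).2
  rw [addBox, dif_pos hls]

lemma mem_addBox (μ : YoungDiagram) (k : ℕ) (hk : Addable μ k) (x : ℕ × ℕ) :
    x ∈ addBox μ (k, μ.rowLen k) ↔ x = (k, μ.rowLen k) ∨ x ∈ μ := by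
  rw [← YoungDiagram.mem_cells, addBox_cells μ k hk, Finset.mem_insert,
    YoungDiagram.mem_cells]

lemma card_addBox (μ : YoungDiagram) (k : ℕ) (hk : Addable μ k) :
    (addBox μ (k, μ.rowLen k)).card = μ.card + 1 := by
  have hne := ((addable_char μ (k, μ.rowLen k)).mpr ⟨rfl, hk⟩).1
  change (addBox μ (k, μ.rowLen k)).cells.card = μ.cells.card + 1
  rw [addBox_cells μ k hk, Finset.card_insert_of_notMem]
  exact fun h => hne ((YoungDiagram.mem_cells _).mp h)

lemma rowLen_eq_of (ν : YoungDiagram) (i t : ℕ) (h : ∀ j, (i, j) ∈ ν ↔ j < t) :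
    ν.rowLen i = t := by
  have h1 : ∀ j, j < ν.rowLen i ↔ j < t := by
    intro j; rw [← YoungDiagram.mem_iff_lt_rowLen]; exact h j
  have ha := h1 (ν.rowLen i)
  have hb := h1 t
  omega

lemma rowLen_addBox (μ : YoungDiagram) (k : ℕ) (hk : Addable μ k) (i : ℕ) :
    (addBox μ (k, μ.rowLen k)).rowLen i = μ.rowLen i + if i = k then 1 else 0 := by
  apply rowLen_eq_of
  intro j
  rw [mem_addBox μ k hk, YoungDiagram.mem_iff_lt_rowLen, Prod.mk.injEq]
  rcases eq_or_ne i k with rfl | hik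
  · simp only [if_pos rfl, eq_self_iff_true, true_and, if_true]
    omega
  · simp only [if_neg hik, add_zero]
    constructor
    · rintro (⟨rfl, -⟩ | h)
      · exact absurd rfl hik
      · exact h
    · exact Or.inr

lemma prod_erase_range_split (m k : ℕ) (hk : k < m) (h : ℕ → ℚ) :
    ∏ j ∈ (Finset.range m).erase k, h j
      = (∏ j ∈ Finset.range k, h j) * ∏ j ∈ Finset.Ico (k+1) m, h j := by
  rw [← Finset.prod_union (by
    simp only [Finset.disjoint_left, Finset.mem_range, Finset.mem_Ico]
    intro a ha hb; omega)]
  apply Finset.prod_congr _ (fun _ _ => rfl)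
  ext a
  simp only [Finset.mem_erase, Finset.mem_range, Finset.mem_union, Finset.mem_Ico]
  omega

lemma pairprod_split (m k : ℕ) (hk : k < m) (f : ℕ → ℕ → ℚ) :
    ∏ i ∈ Finset.range m, ∏ j ∈ Finset.Ico (i+1) m, f i j
      = ((∏ i ∈ Finset.range k, f i k) * ∏ j ∈ Finset.Ico (k+1) m, f k j) *
        ∏ i ∈ (Finset.range m).erase k, ∏ j ∈ (Finset.Ico (i+1) m).erase k, f i j := by
  rw [← Finset.mul_prod_erase (Finset.range m) _ (Finset.mem_range.mpr hk)]
  have step : ∀ i ∈ (Finset.range m).erase k,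
      ∏ j ∈ Finset.Ico (i+1) m, f i j
        = (if i < k then f i k else 1) * ∏ j ∈ (Finset.Ico (i+1) m).erase k, f i j := by
    intro i hi
    rw [Finset.mem_erase, Finset.mem_range] at hi
    rcases Nat.lt_or_ge i k with h | h
    · rw [if_pos h, ← Finset.mul_prod_erase (Finset.Ico (i+1) m) _
        (Finset.mem_Ico.mpr ⟨by omega, hk⟩)]
    · rw [if_neg (by omega), one_mul, Finset.erase_eq_of_notMem]
      rw [Finset.mem_Ico]
      omega
  rw [Finset.prod_congr rfl step, Finset.prod_mul_distrib]
  have : ∏ i ∈ (Finset.range m).erase k, (if i < k then f i k else 1)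
      = ∏ i ∈ Finset.range k, f i k := by
    rw [← Finset.prod_filter]
    apply Finset.prod_congr _ (fun _ _ => rfl)
    ext a
    simp only [Finset.mem_filter, Finset.mem_erase, Finset.mem_range]
    omega
  rw [this]
  ring

/-- shifted row coordinates, as rationals -/
noncomputable def xq (μ : YoungDiagram) (i : ℕ) : ℚ := (μ.rowLen i : ℚ) + μ.card - i

lemma xq_cast (μ : YoungDiagram) (i : ℕ) (hi : i < μ.card + 1) :
    ((L μ (μ.card + 1) i : ℕ) : ℚ) = xq μ i := by
  unfold L xq
  have h1 : μ.card + 1 - 1 - i = μ.card - i := by omega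
  rw [h1, Nat.cast_add, Nat.cast_sub (by omega)]
  ring

lemma xq_strictAnti (μ : YoungDiagram) {a b : ℕ} (hab : a < b) : xq μ b < xq μ a := by
  have := μ.rowLen_anti a b (le_of_lt hab)
  unfold xq
  have hb : (a : ℚ) < b := by exact_mod_cast hab
  have : (μ.rowLen b : ℚ) ≤ μ.rowLen a := by exact_mod_cast this
  linarith

lemma xq_nonneg (μ : YoungDiagram) (i : ℕ) (hi : i ≤ μ.card) : 0 ≤ xq μ i := by
  unfold xq
  have : (i : ℚ) ≤ μ.card := by exact_mod_cast hi
  have : (0:ℚ) ≤ μ.rowLen i := by positivity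
  linarith

lemma xq_last (μ : YoungDiagram) : xq μ μ.card = 0 := by
  unfold xq
  rw [rowLen_zero_of_rows_le μ μ.card (rows_le_card μ)]
  simp

lemma xq_addBox (μ : YoungDiagram) (k : ℕ) (hk : Addable μ k) (i : ℕ) :
    xq (addBox μ (k, μ.rowLen k)) i = xq μ i + 1 + if i = k then 1 else 0 := by
  unfold xq
  rw [rowLen_addBox μ k hk, card_addBox μ k hk]
  rcases eq_or_ne i k with rfl | h
  · simp; push_cast; ring
  · simp [h]; push_cast; ring

lemma H_ratio (μ : YoungDiagram) (k : ℕ) (hk : Addable μ k) (hkm : k < μ.card + 1) :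
    H (addBox μ (k, μ.rowLen k)) *
        (∏ j ∈ (Finset.range (μ.card + 1)).erase k, (xq μ k + 1 - xq μ j))
      = H μ * (xq μ k + 1) * ∏ j ∈ (Finset.range (μ.card + 1)).erase k, (xq μ k - xq μ j) := by
  set ν := addBox μ (k, μ.rowLen k) with hν
  set n := μ.card with hn
  set m := n + 1 with hm
  set x : ℕ → ℚ := fun i => xq μ i with hxdef
  -- rows bounds
  have hμrows : μ.colLen 0 ≤ m := le_trans (rows_le_card μ) (by omega)
  have hνrows : ν.colLen 0 ≤ m := by
    have h1 := rows_le_card ν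
    have h2 : ν.card = μ.card + 1 := card_addBox μ k hk
    omega
  -- cast lemmas
  have hLμ : ∀ i, i < m → ((L μ m i : ℕ) : ℚ) = x i := fun i hi => xq_cast μ i hi
  have hLν : ∀ i, i < m → ((L ν m i : ℕ) : ℚ) = x i + if i = k then 1 else 0 := by
    intro i hi
    have h1 : L ν m i = L μ m i + if i = k then 1 else 0 := by
      unfold L
      rw [hν, rowLen_addBox μ k hk]
      rcases eq_or_ne i k with rfl | h
      · simp only [if_pos rfl]
        omega
      · simp only [if_neg h]
        omega
    rcases eq_or_ne i k with rfl | h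
    · rw [h1, if_pos rfl, if_pos rfl, Nat.cast_add, Nat.cast_one, hLμ i hi]
    · rw [h1, if_neg h, if_neg h, add_zero, add_zero, hLμ i hi]
  -- H formulas with casts rewritten
  have hcastμ : ∀ i ∈ Finset.range m, ∀ j ∈ Finset.Ico (i+1) m,
      ((L μ m i - L μ m j : ℕ) : ℚ) = x i - x j := by
    intro i hi j hj
    rw [Finset.mem_range] at hi
    rw [Finset.mem_Ico] at hj
    rw [Nat.cast_sub (le_of_lt (L_strictAnti μ m hj.1 hj.2)), hLμ i hi, hLμ j hj.2]
  have hcastν : ∀ i ∈ Finset.range m, ∀ j ∈ Finset.Ico (i+1) m,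
      ((L ν m i - L ν m j : ℕ) : ℚ)
        = (x i + if i = k then 1 else 0) - (x j + if j = k then 1 else 0) := by
    intro i hi j hj
    rw [Finset.mem_range] at hi
    rw [Finset.mem_Ico] at hj
    rw [Nat.cast_sub (le_of_lt (L_strictAnti ν m hj.1 hj.2)), hLν i hi, hLν j hj.2]
  have Hμf := H_formula μ m hμrows
  have Hνf := H_formula ν m hνrows
  rw [Finset.prod_congr rfl (fun i hi => Finset.prod_congr rfl (hcastμ i hi))] at Hμf
  rw [Finset.prod_congr rfl (fun i hi => Finset.prod_congr rfl (hcastν i hi))] at Hνf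
  -- factorial relation
  have hFν : ∏ i ∈ Finset.range m, ((L ν m i).factorial : ℚ)
      = (x k + 1) * ∏ i ∈ Finset.range m, ((L μ m i).factorial : ℚ) := by
    have hstep : ∀ i ∈ Finset.range m, ((L ν m i).factorial : ℚ)
        = ((L μ m i).factorial : ℚ) * (if i = k then x k + 1 else 1) := by
      intro i hi
      rw [Finset.mem_range] at hi
      have hLL : L ν m i = L μ m i + if i = k then 1 else 0 := by
        unfold L
        rw [hν, rowLen_addBox μ k hk]
        omega
      rcases eq_or_ne i k with rfl | h
      · rw [hLL, if_pos rfl, if_pos rfl, Nat.factorial_succ]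
        push_cast
        rw [← hLμ i hi]  -- x i = cast L μ m i
        push_cast
        ring
      · rw [hLL, if_neg h, if_neg h, add_zero, mul_one]
    rw [Finset.prod_congr rfl hstep, Finset.prod_mul_distrib,
      Finset.prod_ite_eq' (Finset.range m) k (fun _ => x k + 1),
      if_pos (Finset.mem_range.mpr hkm)]
    ring
  rw [hFν, ← Hμf] at Hνf
  -- product split identities
  have hsplitΔ := pairprod_split m k hkm (fun i j => x i - x j)
  have hsplitΔ' := pairprod_split m k hkm
    (fun i j => (x i + if i = k then 1 else 0) - (x j + if j = k then 1 else 0))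
  have hW := prod_erase_range_split m k hkm (fun j => x k - x j)
  have hW' := prod_erase_range_split m k hkm (fun j => x k + 1 - x j)
  -- simplify the pieces of Δ'
  have hP' : ∏ i ∈ Finset.range k,
      ((x i + if i = k then 1 else 0) - (x k + if k = k then 1 else 0))
      = ∏ i ∈ Finset.range k, (x i - (x k + 1)) := by
    apply Finset.prod_congr rfl
    intro i hi
    rw [Finset.mem_range] at hi
    have h1 : i ≠ k := by omega
    rw [if_pos rfl, if_neg h1]
    ring
  have hQ' : ∏ j ∈ Finset.Ico (k+1) m,
      ((x k + if k = k then 1 else 0) - (x j + if j = k then 1 else 0))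
      = ∏ j ∈ Finset.Ico (k+1) m, (x k + 1 - x j) := by
    apply Finset.prod_congr rfl
    intro j hj
    rw [Finset.mem_Ico] at hj
    have h1 : j ≠ k := by omega
    rw [if_pos rfl, if_neg h1]
    ring
  have hR' : ∏ i ∈ (Finset.range m).erase k, ∏ j ∈ (Finset.Ico (i+1) m).erase k,
      ((x i + if i = k then 1 else 0) - (x j + if j = k then 1 else 0))
      = ∏ i ∈ (Finset.range m).erase k, ∏ j ∈ (Finset.Ico (i+1) m).erase k, (x i - x j) := by
    apply Finset.prod_congr rfl
    intro i hi
    apply Finset.prod_congr rfl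
    intro j hj
    rw [Finset.mem_erase] at hi hj
    rw [if_neg hi.1, if_neg hj.1]
    ring
  rw [hP', hQ', hR'] at hsplitΔ'
  -- the pointwise exchange identity
  have hPS : (∏ i ∈ Finset.range k, (x i - x k)) * (∏ j ∈ Finset.range k, (x k + 1 - x j))
      = (∏ i ∈ Finset.range k, (x i - (x k + 1))) * ∏ j ∈ Finset.range k, (x k - x j) := by
    rw [← Finset.prod_mul_distrib, ← Finset.prod_mul_distrib]
    apply Finset.prod_congr rfl
    intro i _
    ring
  -- Δ * W' = Δ' * W
  have hΔW : (∏ i ∈ Finset.range m, ∏ j ∈ Finset.Ico (i+1) m, (x i - x j)) *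
        (∏ j ∈ (Finset.range m).erase k, (x k + 1 - x j))
      = (∏ i ∈ Finset.range m, ∏ j ∈ Finset.Ico (i+1) m,
          ((x i + if i = k then 1 else 0) - (x j + if j = k then 1 else 0))) *
        (∏ j ∈ (Finset.range m).erase k, (x k - x j)) := by
    rw [hsplitΔ, hsplitΔ', hW, hW']
    linear_combination (∏ i ∈ (Finset.range m).erase k, ∏ j ∈ (Finset.Ico (i+1) m).erase k,
      (x i - x j)) * (∏ j ∈ Finset.Ico (k+1) m, (x k - x j)) *
      (∏ j ∈ Finset.Ico (k+1) m, (x k + 1 - x j)) * hPS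
  -- Δ' ≠ 0
  have hΔ'ne : (∏ i ∈ Finset.range m, ∏ j ∈ Finset.Ico (i+1) m,
      ((x i + if i = k then 1 else 0) - (x j + if j = k then 1 else 0))) ≠ 0 := by
    apply Finset.prod_ne_zero_iff.mpr
    intro i hi
    apply Finset.prod_ne_zero_iff.mpr
    intro j hj
    rw [Finset.mem_range] at hi
    rw [Finset.mem_Ico] at hj
    rw [← hLν i hi, ← hLν j hj.2]
    have := L_strictAnti ν m hj.1 hj.2
    have h2 : (L ν m j : ℚ) < (L ν m i : ℚ) := by exact_mod_cast this
    linarith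
  -- final cancellation
  apply mul_right_cancel₀ hΔ'ne
  calc H ν * (∏ j ∈ (Finset.range m).erase k, (x k + 1 - x j)) *
        (∏ i ∈ Finset.range m, ∏ j ∈ Finset.Ico (i+1) m,
          ((x i + if i = k then 1 else 0) - (x j + if j = k then 1 else 0)))
      = (H ν * ∏ i ∈ Finset.range m, ∏ j ∈ Finset.Ico (i+1) m,
          ((x i + if i = k then 1 else 0) - (x j + if j = k then 1 else 0))) *
        (∏ j ∈ (Finset.range m).erase k, (x k + 1 - x j)) := by ring
    _ = ((x k + 1) * (H μ * ∏ i ∈ Finset.range m, ∏ j ∈ Finset.Ico (i+1) m, (x i - x j))) *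
        (∏ j ∈ (Finset.range m).erase k, (x k + 1 - x j)) := by rw [Hνf]
    _ = (x k + 1) * H μ * ((∏ i ∈ Finset.range m, ∏ j ∈ Finset.Ico (i+1) m, (x i - x j)) *
        (∏ j ∈ (Finset.range m).erase k, (x k + 1 - x j))) := by ring
    _ = (x k + 1) * H μ * ((∏ i ∈ Finset.range m, ∏ j ∈ Finset.Ico (i+1) m,
          ((x i + if i = k then 1 else 0) - (x j + if j = k then 1 else 0))) *
        (∏ j ∈ (Finset.range m).erase k, (x k - x j))) := by rw [hΔW]
    _ = H μ * (x k + 1) * (∏ j ∈ (Finset.range m).erase k, (x k - x j)) *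
        (∏ i ∈ Finset.range m, ∏ j ∈ Finset.Ico (i+1) m,
          ((x i + if i = k then 1 else 0) - (x j + if j = k then 1 else 0))) := by ring

lemma phiEval_eq (μ : YoungDiagram) (z : ℚ) :
    phiEval μ z = ∏ i ∈ Finset.range μ.card, (z + xq μ i - 1) := by
  apply Finset.prod_congr rfl
  intro i _
  unfold xq
  ring

lemma phiEval_addBox (μ : YoungDiagram) (k : ℕ) (hk : Addable μ k) (z : ℚ) :
    phiEval (addBox μ (k, μ.rowLen k)) z
      = ∏ i ∈ Finset.range (μ.card + 1), (z + xq μ i + if i = k then 1 else 0) := by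
  rw [phiEval_eq, card_addBox μ k hk]
  apply Finset.prod_congr rfl
  intro i _
  rw [xq_addBox μ k hk]
  ring

lemma A_eq (μ : YoungDiagram) (z : ℚ) :
    ∏ i ∈ Finset.range (μ.card + 1), (z + xq μ i) = z * phiEval μ (z + 1) := by
  rw [Finset.prod_range_succ, xq_last, add_zero, phiEval_eq, mul_comm]
  congr 1
  apply Finset.prod_congr rfl
  intro i _
  ring

lemma prodm1_eq (μ : YoungDiagram) (z : ℚ) :
    ∏ i ∈ Finset.range (μ.card + 1), (z + xq μ i - 1) = (z - 1) * phiEval μ z := by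
  rw [Finset.prod_range_succ, xq_last, phiEval_eq, mul_comm]
  congr 1
  ring

lemma image_erase_of_injOn {s : Finset ℕ} {f : ℕ → ℚ} (hf : Set.InjOn f s) (a : ℕ)
    (ha : a ∈ s) : (s.image f).erase (f a) = (s.erase a).image f := by
  ext b
  simp only [Finset.mem_erase, Finset.mem_image]
  constructor
  · rintro ⟨hb, c, hc, rfl⟩
    exact ⟨c, ⟨fun hca => hb (by rw [hca]), hc⟩, rfl⟩
  · rintro ⟨c, ⟨hca, hc⟩, rfl⟩
    exact ⟨fun h => hca (hf hc ha h), c, hc, rfl⟩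

lemma keyD_generic (μ : YoungDiagram) (z : ℚ) (hz1 : z ≠ 1)
    (hz2 : ∀ i, i ≤ μ.card → z + xq μ i ≠ 0) :
    ∑ c ∈ addables μ, phiEval (addBox μ c) z / H (addBox μ c)
      = phiEval μ z / H μ + z * phiEval μ (z + 1) / H μ := by
  set n := μ.card with hn
  set A : ℚ := z * phiEval μ (z + 1) with hAdef
  have hAprod : ∏ i ∈ Finset.range (n+1), (z + xq μ i) = A := A_eq μ z
  have hA : A ≠ 0 := by
    rw [← hAprod]
    apply Finset.prod_ne_zero_iff.mpr
    intro i hi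
    exact hz2 i (Nat.lt_succ_iff.mp (Finset.mem_range.mp hi))
  set v : ℕ → ℚ := fun i => if i < n + 1 then xq μ i else if i = n + 1 then -1 else -z
    with hvdef
  have hv_lt : ∀ i, i < n + 1 → v i = xq μ i := by
    intro i hi; simp only [hvdef, if_pos hi]
  have hv_n1 : v (n+1) = -1 := by simp [hvdef]
  have hv_n2 : v (n+2) = -z := by
    simp only [hvdef, if_neg (by omega : ¬ (n+2 < n+1)), if_neg (by omega : ¬ (n+2 = n+1))]
  have hxnonneg : ∀ i, i < n + 1 → 0 ≤ xq μ i := fun i hi => xq_nonneg μ i (by omega)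
  have hv_inj : ∀ a ∈ Finset.range (n+3), ∀ b ∈ Finset.range (n+3), v a = v b → a = b := by
    intro a ha b hb hab
    rw [Finset.mem_range] at ha hb
    by_contra hne
    wlog h : a < b generalizing a b
    · exact this b hb a ha hab.symm (Ne.symm hne) (by omega)
    rcases Nat.lt_or_ge b (n+1) with hb1 | hb1
    · rw [hv_lt a (by omega), hv_lt b hb1] at hab
      exact absurd hab (ne_of_gt (xq_strictAnti μ h))
    · rcases Nat.lt_or_ge a (n+1) with ha1 | ha1
      · rw [hv_lt a ha1] at hab
        rcases Nat.eq_or_lt_of_le hb1 with hb2 | hb2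
        · rw [← hb2, hv_n1] at hab
          have := hxnonneg a ha1; linarith
        · have hb3 : b = n + 2 := by omega
          rw [hb3, hv_n2] at hab
          exact hz2 a (by omega) (by linarith)
      · have ha2 : a = n + 1 := by omega
        have hb3 : b = n + 2 := by omega
        rw [ha2, hb3, hv_n1, hv_n2] at hab
        apply hz1
        linarith
  set P : Polynomial ℚ := (X + C (z+1)) * ∏ i ∈ Finset.range (n+1), (X - C (xq μ i - 1))
    with hPdef
  have hPm : P.Monic := (monic_X_add_C (z+1)).mul
    (monic_prod_of_monic _ _ (fun i _ => monic_X_sub_C (xq μ i - 1)))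
  have hPdeg : P.natDegree = n + 2 := by
    rw [hPdef, (monic_X_add_C (z+1)).natDegree_mul
      (monic_prod_of_monic _ _ (fun i _ => monic_X_sub_C (xq μ i - 1))),
      natDegree_X_add_C, natDegree_prod _ _ (fun i _ => X_sub_C_ne_zero (xq μ i - 1))]
    simp only [natDegree_X_sub_C, Finset.sum_const, smul_eq_mul, Finset.card_range]
    omega
  set S : Finset ℚ := (Finset.range (n+3)).image v with hSdef
  have hScard : S.card = n + 3 := by
    rw [hSdef, Finset.card_image_of_injOn (fun a ha b hb => hv_inj a ha b hb),
      Finset.card_range]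
  have hdeg : P.degree < S.card := by
    rw [hScard, degree_eq_natDegree hPm.ne_zero, hPdeg]
    exact_mod_cast Nat.lt_succ_self (n+2)
  have hlag := lagrange_residue_sum S P hdeg
  rw [hScard] at hlag
  have hcoeff : P.coeff (n + 3 - 1) = 1 := by
    have h3 : n + 3 - 1 = n + 2 := by omega
    rw [h3, ← hPdeg, hPm.coeff_natDegree]
  rw [hcoeff, hSdef, Finset.sum_image (fun a ha b hb => hv_inj a ha b hb)] at hlag
  have herase : ∀ i ∈ Finset.range (n+3),
      ((Finset.range (n+3)).image v).erase (v i)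
        = ((Finset.range (n+3)).erase i).image v := by
    intro i hi
    exact image_erase_of_injOn (fun a ha b hb => hv_inj a (Finset.mem_coe.mp ha)
      b (Finset.mem_coe.mp hb)) i hi
  set T : ℕ → ℚ := fun i =>
    P.eval (v i) * (∏ j ∈ (Finset.range (n+3)).erase i, (v i - v j))⁻¹ with hTdef
  have hlag2 : ∑ i ∈ Finset.range (n+3), T i = 1 := by
    rw [← hlag]
    apply Finset.sum_congr rfl
    intro i hi
    rw [hTdef]
    simp only
    congr 2
    rw [herase i hi, Finset.prod_image]
    intro a ha b hb
    exact hv_inj a (Finset.mem_of_mem_erase ha) b (Finset.mem_of_mem_erase hb)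
  have hsplit : ∑ i ∈ Finset.range (n+1), T i + T (n+1) + T (n+2) = 1 := by
    rw [← hlag2]
    rw [Finset.sum_range_succ (f := T) (n := n+2), Finset.sum_range_succ (f := T) (n := n+1)]
  have hTn1 : T (n+1) = 0 := by
    have h0 : P.eval (v (n+1)) = 0 := by
      rw [hv_n1, hPdef, eval_mul, eval_prod]
      apply mul_eq_zero_of_right
      apply Finset.prod_eq_zero (Finset.mem_range.mpr (Nat.lt_succ_self n))
      have hxn : xq μ n = 0 := xq_last μ
      simp [hxn]
    rw [hTdef]
    simp only [h0, zero_mul]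
  have hTn2 : T (n+2) = -(phiEval μ z) * A⁻¹ := by
    have heval : P.eval (v (n+2)) = ∏ j ∈ Finset.range (n+1), (1 - z - xq μ j) := by
      rw [hv_n2, hPdef, eval_mul, eval_prod]
      simp only [eval_add, eval_X, eval_C, eval_sub]
      rw [show -z + (z + 1) = 1 by ring, one_mul]
      apply Finset.prod_congr rfl
      intro j _
      ring
    have herase2 : (Finset.range (n+3)).erase (n+2) = Finset.range (n+2) := by
      ext a
      simp only [Finset.mem_erase, Finset.mem_range]
      omega
    have hden : ∏ j ∈ (Finset.range (n+3)).erase (n+2), (v (n+2) - v j)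
        = (1 - z) * ∏ j ∈ Finset.range (n+1), (-z - xq μ j) := by
      rw [herase2, Finset.prod_range_succ, hv_n2, hv_n1]
      rw [show -z - (-1) = 1 - z by ring, mul_comm]
      congr 1
      apply Finset.prod_congr rfl
      intro j hj
      rw [hv_lt j (Finset.mem_range.mp hj)]
    have hsign1 : ∏ j ∈ Finset.range (n+1), (1 - z - xq μ j)
        = (-1)^(n+1) * ((z - 1) * phiEval μ z) := by
      rw [← prodm1_eq μ z]
      calc ∏ j ∈ Finset.range (n+1), (1 - z - xq μ j)
          = ∏ j ∈ Finset.range (n+1), ((-1) * (z + xq μ j - 1)) :=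
            Finset.prod_congr rfl (fun j _ => by ring)
        _ = (-1)^(n+1) * ∏ j ∈ Finset.range (n+1), (z + xq μ j - 1) := by
            rw [Finset.prod_mul_distrib, Finset.prod_const, Finset.card_range]
    have hsign2 : ∏ j ∈ Finset.range (n+1), (-z - xq μ j) = (-1)^(n+1) * A := by
      rw [← hAprod]
      calc ∏ j ∈ Finset.range (n+1), (-z - xq μ j)
          = ∏ j ∈ Finset.range (n+1), ((-1) * (z + xq μ j)) :=
            Finset.prod_congr rfl (fun j _ => by ring)
        _ = (-1)^(n+1) * ∏ j ∈ Finset.range (n+1), (z + xq μ j) := by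
            rw [Finset.prod_mul_distrib, Finset.prod_const, Finset.card_range]
    rw [hTdef]
    simp only
    rw [heval, hden, hsign1, hsign2]
    have h1z : (1 : ℚ) - z ≠ 0 := fun h => hz1 (by linarith)
    have hpow : ((-1 : ℚ))^(n+1) ≠ 0 := pow_ne_zero _ (by norm_num)
    field_simp
    ring
  have hvnum : ∀ k, k < n + 1 → P.eval (v k)
      = (z + xq μ k + 1) * ∏ j ∈ (Finset.range (n+1)).erase k, (xq μ k + 1 - xq μ j) := by
    intro k hk
    rw [hv_lt k hk, hPdef, eval_mul, eval_prod]
    simp only [eval_add, eval_X, eval_C, eval_sub]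
    rw [← Finset.mul_prod_erase (Finset.range (n+1))
      (fun i => xq μ k - (xq μ i - 1)) (Finset.mem_range.mpr hk)]
    rw [show xq μ k - (xq μ k - 1) = 1 by ring, one_mul]
    rw [show xq μ k + (z+1) = z + xq μ k + 1 by ring]
    congr 1
    apply Finset.prod_congr rfl
    intro j _
    ring
  have hvden : ∀ k, k < n + 1 →
      ∏ j ∈ (Finset.range (n+3)).erase k, (v k - v j)
        = (xq μ k + 1) * ((xq μ k + z) *
            ∏ j ∈ (Finset.range (n+1)).erase k, (xq μ k - xq μ j)) := by
    intro k hk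
    have hseteq : (Finset.range (n+3)).erase k
        = insert (n+1) (insert (n+2) ((Finset.range (n+1)).erase k)) := by
      ext a
      simp only [Finset.mem_erase, Finset.mem_range, Finset.mem_insert]
      omega
    rw [hseteq, Finset.prod_insert (by
        simp only [Finset.mem_insert, Finset.mem_erase, Finset.mem_range]
        omega),
      Finset.prod_insert (by
        simp only [Finset.mem_erase, Finset.mem_range]
        omega)]
    rw [hv_n1, hv_n2, hv_lt k hk]
    rw [show xq μ k - (-1) = xq μ k + 1 by ring, show xq μ k - (-z) = xq μ k + z by ring]
    congr 2
    apply Finset.prod_congr rfl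
    intro j hj
    rw [Finset.mem_erase, Finset.mem_range] at hj
    rw [hv_lt j hj.2]
  have hT0 : ∀ i ∈ Finset.range (n+1), i ∉ slots μ → T i = 0 := by
    intro i hi hni
    rw [Finset.mem_range] at hi
    have hnadd : ¬ Addable μ i := by
      intro h
      exact hni (Finset.mem_filter.mpr ⟨Finset.mem_range.mpr (by omega), h⟩)
    have hi0 : i ≠ 0 := fun h => hnadd (Or.inl h)
    have hrow : μ.rowLen (i-1) ≤ μ.rowLen i := by
      by_contra h
      exact hnadd (Or.inr (by omega))
    have hrow2 : μ.rowLen (i-1) = μ.rowLen i :=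
      le_antisymm hrow (μ.rowLen_anti (i-1) i (by omega))
    have hxi : xq μ (i-1) = xq μ i + 1 := by
      unfold xq
      rw [hrow2]
      have h1 : (1:ℚ) ≤ i := by exact_mod_cast Nat.one_le_iff_ne_zero.mpr hi0
      rw [Nat.cast_sub (Nat.one_le_iff_ne_zero.mpr hi0)]
      push_cast
      ring
    have hnum0 : P.eval (v i) = 0 := by
      rw [hvnum i hi]
      apply mul_eq_zero_of_right
      apply Finset.prod_eq_zero (i := i - 1)
      · rw [Finset.mem_erase, Finset.mem_range]
        omega
      · rw [hxi]; ring
    rw [hTdef]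
    simp only [hnum0, zero_mul]
  have hTk : ∀ k ∈ slots μ,
      phiEval (addBox μ (k, μ.rowLen k)) z / H (addBox μ (k, μ.rowLen k))
        = A * T k / H μ := by
    intro k hks
    rw [slots, Finset.mem_filter, Finset.mem_range] at hks
    obtain ⟨hkm', hkadd⟩ := hks
    have hkm : k < n + 1 := by omega
    have hHν : H (addBox μ (k, μ.rowLen k)) ≠ 0 := H_ne_zero _
    have hHμ : H μ ≠ 0 := H_ne_zero μ
    have hWk : ∏ j ∈ (Finset.range (n+1)).erase k, (xq μ k - xq μ j) ≠ 0 := by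
      apply Finset.prod_ne_zero_iff.mpr
      intro j hj
      rw [Finset.mem_erase, Finset.mem_range] at hj
      rcases Nat.lt_or_ge j k with h | h
      · have := xq_strictAnti μ h; intro hc; linarith
      · have hlt : k < j := by omega
        have := xq_strictAnti μ hlt; intro hc; linarith
    have hxk1 : xq μ k + 1 ≠ 0 := by
      have := hxnonneg k hkm; intro h; linarith
    have hxkz : xq μ k + z ≠ 0 := by
      have := hz2 k (by omega); intro h; apply this; linarith
    have hratio : H (addBox μ (k, μ.rowLen k)) *
          (∏ j ∈ (Finset.range (n+1)).erase k, (xq μ k + 1 - xq μ j))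
        = H μ * (xq μ k + 1) * ∏ j ∈ (Finset.range (n+1)).erase k, (xq μ k - xq μ j) :=
      H_ratio μ k hkadd (by omega)
    have hφν : phiEval (addBox μ (k, μ.rowLen k)) z
        = (z + xq μ k + 1) * ∏ i ∈ (Finset.range (n+1)).erase k, (z + xq μ i) := by
      rw [phiEval_addBox μ k hkadd]
      rw [show μ.card + 1 = n + 1 from rfl]
      rw [← Finset.mul_prod_erase (Finset.range (n+1))
        (fun i => z + xq μ i + if i = k then 1 else 0) (Finset.mem_range.mpr hkm)]
      rw [show (z + xq μ k + if k = k then (1:ℚ) else 0) = z + xq μ k + 1 by simp]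
      congr 1
      apply Finset.prod_congr rfl
      intro j hj
      rw [Finset.mem_erase] at hj
      rw [if_neg hj.1, add_zero]
    have hAE : A = (z + xq μ k) * ∏ i ∈ (Finset.range (n+1)).erase k, (z + xq μ i) := by
      rw [← hAprod, ← Finset.mul_prod_erase (Finset.range (n+1)) _ (Finset.mem_range.mpr hkm)]
    rw [hTdef]
    simp only
    rw [hvnum k hkm, hvden k hkm, hφν, hAE]
    rw [div_eq_div_iff hHν hHμ]
    field_simp
    linear_combination (-((z + xq μ k) * (z + xq μ k + 1) *
      ∏ i ∈ (Finset.range (n+1)).erase k, (z + xq μ i))) * hratio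
  have hsum_slots : ∑ i ∈ Finset.range (n+1), T i = ∑ k ∈ slots μ, T k := by
    symm
    apply Finset.sum_subset
    · intro k hk
      rw [slots, Finset.mem_filter, Finset.mem_range] at hk
      rw [Finset.mem_range]
      omega
    · exact hT0
  have hslotsum : ∑ k ∈ slots μ, T k = 1 + phiEval μ z * A⁻¹ := by
    rw [hTn1, hTn2, add_zero, hsum_slots] at hsplit
    linarith [hsplit]
  have hLHS : ∑ c ∈ addables μ, phiEval (addBox μ c) z / H (addBox μ c)
      = ∑ k ∈ slots μ, phiEval (addBox μ (k, μ.rowLen k)) z / H (addBox μ (k, μ.rowLen k)) := by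
    rw [addables_eq μ, Finset.sum_image]
    intro a _ b _ hab
    exact ((Prod.mk.injEq _ _ _ _).mp hab).1
  rw [hLHS, Finset.sum_congr rfl hTk, ← Finset.sum_div, ← Finset.mul_sum, hslotsum]
  have hHμ : H μ ≠ 0 := H_ne_zero μ
  field_simp
  ring

noncomputable def Phi (μ : YoungDiagram) : Polynomial ℚ :=
  ∏ i ∈ Finset.range μ.card, (X + C ((μ.rowLen i : ℚ) + μ.card - i - 1))

lemma phiEval_eval (μ : YoungDiagram) (z : ℚ) : phiEval μ z = (Phi μ).eval z := by
  rw [Phi, eval_prod, phiEval]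
  apply Finset.prod_congr rfl
  intro i _
  simp only [eval_add, eval_X, eval_C]
  ring

lemma keyD (z : ℚ) (μ : YoungDiagram) :
    D (fun t => phiEval t z / H t) μ = z * phiEval μ (z + 1) / H μ := by
  set Lp : Polynomial ℚ :=
    (∑ c ∈ addables μ, C (H (addBox μ c))⁻¹ * Phi (addBox μ c)) - C (H μ)⁻¹ * Phi μ
    with hLp
  set Rp : Polynomial ℚ := C (H μ)⁻¹ * (X * (Phi μ).comp (X + 1)) with hRp
  have hevalL : ∀ w : ℚ, Lp.eval w = D (fun t => phiEval t w / H t) μ := by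
    intro w
    rw [hLp, eval_sub, eval_finset_sum, D]
    simp only [eval_mul, eval_C]
    congr 1
    · apply Finset.sum_congr rfl
      intro c _
      rw [phiEval_eval, div_eq_inv_mul]
    · rw [phiEval_eval, div_eq_inv_mul]
  have hevalR : ∀ w : ℚ, Rp.eval w = w * phiEval μ (w + 1) / H μ := by
    intro w
    rw [hRp, eval_mul, eval_mul, eval_C, eval_comp]
    simp only [eval_add, eval_X, eval_one]
    rw [← phiEval_eval]
    field_simp
  have heq : Lp = Rp := by
    apply Polynomial.eq_of_infinite_eval_eq
    have hbad : (↑((Finset.range (μ.card + 1)).image (fun i => -(xq μ i))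
        ∪ {(1 : ℚ)}) : Set ℚ).Finite := Finset.finite_toSet _
    apply Set.Infinite.mono _ (hbad.infinite_compl)
    intro w hw
    simp only [Set.mem_compl_iff, Finset.coe_union, Set.mem_union, Finset.mem_coe,
      Finset.mem_image, Finset.mem_union, Finset.mem_singleton, Finset.coe_singleton,
      Set.mem_singleton_iff] at hw
    push_neg at hw
    obtain ⟨hw1, hw2⟩ := hw
    have hz1 : w ≠ 1 := hw2
    have hz2 : ∀ i, i ≤ μ.card → w + xq μ i ≠ 0 := by
      intro i hi hc
      exact hw1 i (Finset.mem_range.mpr (by omega)) (by linarith)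
    have hkey := keyD_generic μ w hz1 hz2
    show eval w Lp = eval w Rp
    rw [hevalL w, hevalR w, D]
    rw [hkey]
    ring
  rw [← hevalL z, heq, hevalR z]

lemma D_mul_const (a : ℚ) (g : YoungDiagram → ℚ) :
    D (fun t => a * g t) = fun t => a * D g t := by
  funext t
  rw [D, D]
  rw [mul_sub, Finset.mul_sum]

lemma Dpow_mul_const (s : ℕ) (a : ℚ) (g : YoungDiagram → ℚ) :
    D^[s] (fun t => a * g t) = fun t => a * D^[s] g t := by
  induction s generalizing g with
  | zero => simp
  | succ s ih =>
    rw [Function.iterate_succ_apply, Function.iterate_succ_apply, D_mul_const, ih (D g)]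

lemma Dpow_phi_general (r : ℕ) (z : ℚ) :
    D^[r+1] (fun t => phiEval t z / H t)
      = fun t => (∏ j ∈ Finset.range (r+1), (z + (j : ℚ))) * (phiEval t (z + r + 1) / H t) := by
  induction r generalizing z with
  | zero =>
    rw [Function.iterate_one]
    funext t
    rw [show D (fun t => phiEval t z / H t) = fun t => z * phiEval t (z + 1) / H t from
      funext (fun t => keyD z t)]
    simp only [Finset.prod_range_one]
    push_cast
    rw [mul_div_assoc]
    norm_num
  | succ r ih =>
    rw [Function.iterate_succ_apply]
    rw [show D (fun t => phiEval t z / H t) = fun t => z * (phiEval t (z + 1) / H t) from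
      funext (fun t => by rw [keyD z t, mul_div_assoc])]
    rw [Dpow_mul_const (r+1) z (fun t => phiEval t (z+1) / H t), ih (z+1)]
    funext t
    simp only
    have hprod : ∏ j ∈ Finset.range (r+2), (z + (j : ℚ))
        = z * ∏ j ∈ Finset.range (r+1), (z + 1 + (j : ℚ)) := by
      rw [Finset.prod_range_succ', Nat.cast_zero, add_zero, mul_comm]
      congr 1
      apply Finset.prod_congr rfl
      intro j _
      push_cast
      ring
    rw [hprod]
    have harg : z + 1 + (r : ℚ) + 1 = z + ((r:ℚ) + 1) + 1 := by ring
    rw [harg]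
    push_cast
    ring


/-- `D^{r+1}(φ_λ(z)/H_λ) = z(z+1)⋯(z+r)·φ_λ(z+r+1)/H_λ` for every `z`; in particular
`D^{r+1}(φ_λ(−r)/H_λ) = 0`, i.e. `λ ↦ φ_λ(−r)` is a `D`-polynomial of degree at most `r`. -/
theorem Dpow_phi (r : ℕ) (l : YoungDiagram) :
    (∀ z : ℚ, D^[r + 1] (fun t => phiEval t z / H t) l
        = (∏ j ∈ Finset.range (r + 1), (z + (j : ℚ))) * phiEval l (z + (r : ℚ) + 1) / H l) ∧
    D^[r + 1] (fun t => phiEval t (-(r : ℚ)) / H t) l = 0 := by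
  constructor
  · intro z
    rw [Dpow_phi_general r z, mul_div_assoc]
  · rw [Dpow_phi_general r (-(r : ℚ))]
    simp only
    have hzero : ∏ j ∈ Finset.range (r+1), (-(r:ℚ) + (j : ℚ)) = 0 := by
      apply Finset.prod_eq_zero (Finset.mem_range.mpr (Nat.lt_succ_self r))
      ring
    rw [hzero, zero_mul]

end HookDiff
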